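/- arXiv:1403.5873 — 2 statements merged into one kernel-verified Lean document; each statement's English description precedes it below -/
import Mathlib

section
/- A pointed regular category C is subtractive if and only if it is 2-star-permutable with respect to the ideal N of zero morphisms, i.e. Eq(f) Eq(g)* = Eq(g) Eq(f)* for every pair of regular epimorphisms f and g of C with the same domain, where for a regular epimorphism h: X → Z the star Eq(h)* is the star relation (0, ker(h)): Ker(h) ⇉ X determined by the kernel of h. -/
open CategoryTheory CategoryTheory.Limits

universe v u

namespace Paper

variable {𝒞 : Type u} [Category.{v} 𝒞]

/-- `f` is a regular epimorphism: it is a coequaliser of some pair of morphisms. -/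
def IsRegEpi {X Y : 𝒞} (f : X ⟶ Y) : Prop :=
  ∃ (Z : 𝒞) (a b : Z ⟶ X), a ≫ f = b ≫ f ∧
    ∀ {T : 𝒞} (h : X ⟶ T), a ≫ h = b ≫ h → ∃! u : Y ⟶ T, f ≫ u = h

/-- Regular epimorphisms are pullback-stable. -/
def RegEpisStable (𝒞 : Type u) [Category.{v} 𝒞] : Prop :=
  ∀ {P X Y Z : 𝒞} (p₁ : P ⟶ X) (p₂ : P ⟶ Y) (f : X ⟶ Z) (g : Y ⟶ Z),
    IsPullback p₁ p₂ f g → IsRegEpi g → IsRegEpi p₁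

/-- Every kernel pair admits a coequaliser. -/
def KernelPairsHaveCoequalisers (𝒞 : Type u) [Category.{v} 𝒞] : Prop :=
  ∀ {R X Y : 𝒞} (f : X ⟶ Y) (a b : R ⟶ X), IsKernelPair f a b →
    ∃ (Q : 𝒞) (q : X ⟶ Q), a ≫ q = b ≫ q ∧
      ∀ {T : 𝒞} (h : X ⟶ T), a ≫ h = b ≫ h → ∃! u : Q ⟶ T, q ≫ u = h

/-- A relation from `X` to `Y`: a jointly monomorphic span. -/
structure Rel (𝒞 : Type u) [Category.{v} 𝒞] (X Y : 𝒞) where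
  R : 𝒞
  p1 : R ⟶ X
  p2 : R ⟶ Y
  jm : ∀ {Z : 𝒞} (a b : Z ⟶ R), a ≫ p1 = b ≫ p1 → a ≫ p2 = b ≫ p2 → a = b

variable {X Y Z : 𝒞}

/-- `ρ` is a subrelation of `σ`. -/
def Rel.le (ρ σ : Rel 𝒞 X Y) : Prop :=
  ∃ j : ρ.R ⟶ σ.R, j ≫ σ.p1 = ρ.p1 ∧ j ≫ σ.p2 = ρ.p2

/-- `ρ` and `σ` are the same relation (isomorphic as subobjects of `X × Y`). -/
def Rel.equiv (ρ σ : Rel 𝒞 X Y) : Prop := ρ.le σ ∧ σ.le ρ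

/-- The opposite relation. -/
def Rel.op (ρ : Rel 𝒞 X Y) : Rel 𝒞 Y X :=
  ⟨ρ.R, ρ.p2, ρ.p1, fun a b h2 h1 => ρ.jm a b h1 h2⟩

/-- A morphism viewed as a relation. -/
def homRel (f : X ⟶ Y) : Rel 𝒞 X Y :=
  ⟨X, 𝟙 X, f, fun a b h _ => by simpa using h⟩

/-- The discrete (diagonal) relation on `X`. -/
def diagRel (X : 𝒞) : Rel 𝒞 X X := homRel (𝟙 X)

/-- The kernel pair `Eq(f)` of `f` as a relation on `X`. -/
noncomputable def kerPairRel [HasPullbacks 𝒞] (f : X ⟶ Y) : Rel 𝒞 X X :=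
  ⟨pullback f f, pullback.fst f f, pullback.snd f f,
    fun a b h1 h2 => pullback.hom_ext h1 h2⟩

/-- `τ` is the composite `σρ` (first `ρ` from `X` to `Y`, then `σ` from `Y` to `Z`),
i.e. the (regular epi, jointly mono) factorisation of the span induced on the
pullback of `ρ.p2` and `σ.p1`. -/
def IsRelComp [HasPullbacks 𝒞] (σ : Rel 𝒞 Y Z) (ρ : Rel 𝒞 X Y) (τ : Rel 𝒞 X Z) : Prop :=
  ∃ e : pullback ρ.p2 σ.p1 ⟶ τ.R, IsRegEpi e ∧
    e ≫ τ.p1 = pullback.fst ρ.p2 σ.p1 ≫ ρ.p1 ∧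
    e ≫ τ.p2 = pullback.snd ρ.p2 σ.p1 ≫ σ.p2

def Rel.IsReflexive (ρ : Rel 𝒞 X X) : Prop :=
  ∃ r : X ⟶ ρ.R, r ≫ ρ.p1 = 𝟙 X ∧ r ≫ ρ.p2 = 𝟙 X

def Rel.IsSymmetric (ρ : Rel 𝒞 X X) : Prop :=
  ∃ s : ρ.R ⟶ ρ.R, s ≫ ρ.p1 = ρ.p2 ∧ s ≫ ρ.p2 = ρ.p1

def Rel.IsTransitive [HasPullbacks 𝒞] (ρ : Rel 𝒞 X X) : Prop :=
  ∃ t : pullback ρ.p2 ρ.p1 ⟶ ρ.R,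
    t ≫ ρ.p1 = pullback.fst ρ.p2 ρ.p1 ≫ ρ.p1 ∧
    t ≫ ρ.p2 = pullback.snd ρ.p2 ρ.p1 ≫ ρ.p2

def Rel.IsEquivalence [HasPullbacks 𝒞] (ρ : Rel 𝒞 X X) : Prop :=
  ρ.IsReflexive ∧ ρ.IsSymmetric ∧ ρ.IsTransitive

/-- A finitely complete category is a Mal'tsev category when every reflexive
relation in it is an equivalence relation. -/
def IsMaltsev (𝒞 : Type u) [Category.{v} 𝒞] [HasPullbacks 𝒞] : Prop :=
  ∀ {X : 𝒞} (ρ : Rel 𝒞 X X), ρ.IsReflexive → ρ.IsEquivalence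

/-- A square of type (1): split epimorphisms `f` (with section `s`) and `g`
(with section `t`), regular epimorphisms `c` and `d`, with `f·c = d·g` and
`s·d = c·t`. -/
structure IsSquare1 {A B E D : 𝒞} (f : A ⟶ B) (s : B ⟶ A) (g : E ⟶ D) (t : D ⟶ E)
    (c : E ⟶ A) (d : D ⟶ B) : Prop where
  sec_f : s ≫ f = 𝟙 B
  sec_g : t ≫ g = 𝟙 D
  regepi_c : IsRegEpi c
  regepi_d : IsRegEpi d
  comm1 : c ≫ f = g ≫ d
  comm2 : d ≫ s = t ≫ c

/-- `N` is an ideal of morphisms. -/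
def IsIdeal (N : MorphismProperty 𝒞) : Prop :=
  ∀ {X Y Z : 𝒞} (f : X ⟶ Y) (g : Y ⟶ Z), N f ∨ N g → N (f ≫ g)

/-- `n` is an `N`-kernel of `f`. -/
def IsNKernel (N : MorphismProperty 𝒞) {X Y K : 𝒞} (f : X ⟶ Y) (n : K ⟶ X) : Prop :=
  N (n ≫ f) ∧ ∀ {Z : 𝒞} (m : Z ⟶ X), N (m ≫ f) → ∃! u : Z ⟶ K, u ≫ n = m

/-- Every morphism admits an `N`-kernel. -/
def HasNKernels (N : MorphismProperty 𝒞) : Prop :=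
  ∀ {X Y : 𝒞} (f : X ⟶ Y), ∃ (K : 𝒞) (n : K ⟶ X), IsNKernel N f n

/-- `τ` is the largest star subrelation `ρ*` of the relation `ρ`. -/
def IsLargestStarSub (N : MorphismProperty 𝒞) (ρ τ : Rel 𝒞 X Y) : Prop :=
  τ.le ρ ∧ N τ.p1 ∧ ∀ σ : Rel 𝒞 X Y, σ.le ρ → N σ.p1 → σ.le τ

/-- `(s1, s2)` is the star-kernel of `f`: the universal star coequalised by `f`. -/
def IsStarKernel (N : MorphismProperty 𝒞) {S X Y : 𝒞} (f : X ⟶ Y) (s1 s2 : S ⟶ X) : Prop :=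
  N s1 ∧ s1 ≫ f = s2 ≫ f ∧
    ∀ {T : 𝒞} (t1 t2 : T ⟶ X), N t1 → t1 ≫ f = t2 ≫ f →
      ∃! u : T ⟶ S, u ≫ s1 = t1 ∧ u ≫ s2 = t2

/-- `(ν1, ν2)` is the star of the pullback relation of `(g, δ)`: the universal
pair with `ν1 ∈ N` and `δ·ν1 = g·ν2`. -/
def IsStarPullbackRel (N : MorphismProperty 𝒞) {W E D P : 𝒞} (δ : W ⟶ D) (g : E ⟶ D)
    (ν1 : P ⟶ W) (ν2 : P ⟶ E) : Prop :=
  N ν1 ∧ ν1 ≫ δ = ν2 ≫ g ∧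
    ∀ {T : 𝒞} (t1 : T ⟶ W) (t2 : T ⟶ E), N t1 → t1 ≫ δ = t2 ≫ g →
      ∃! u : T ⟶ P, u ≫ ν1 = t1 ∧ u ≫ ν2 = t2

/-- `f` is a coequaliser of `(s1, s2)`. -/
def IsCoeqOf {S X Y : 𝒞} (f : X ⟶ Y) (s1 s2 : S ⟶ X) : Prop :=
  s1 ≫ f = s2 ≫ f ∧ ∀ {T : 𝒞} (h : X ⟶ T), s1 ≫ h = s2 ≫ h → ∃! u : Y ⟶ T, f ≫ u = h

/-- Star-regularity: every regular epimorphism is a coequaliser of a star. -/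
def StarRegular (𝒞 : Type u) [Category.{v} 𝒞] (N : MorphismProperty 𝒞) : Prop :=
  ∀ {X Y : 𝒞} (f : X ⟶ Y), IsRegEpi f →
    ∃ (S : 𝒞) (s1 s2 : S ⟶ X), N s1 ∧ IsCoeqOf f s1 s2

/-- `f` is saturating: the induced morphism between the `N`-kernels of the
identities is a regular epimorphism. -/
def Saturating (N : MorphismProperty 𝒞) {X Y : 𝒞} (f : X ⟶ Y) : Prop :=
  ∀ {KX KY : 𝒞} (nX : KX ⟶ X) (nY : KY ⟶ Y), IsNKernel N (𝟙 X) nX → IsNKernel N (𝟙 Y) nY →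
    ∀ u : KX ⟶ KY, u ≫ nY = nX ≫ f → IsRegEpi u

/-- `X` is an `N`-trivial object. -/
def NTrivial (N : MorphismProperty 𝒞) (X : 𝒞) : Prop := N (𝟙 X)

/-- The multi-pointed category has enough trivial objects: `N` is a closed ideal and
`N`-trivial objects are closed under subobjects and squares. -/
def EnoughTrivialObjects [HasBinaryProducts 𝒞] (N : MorphismProperty 𝒞) : Prop :=
  (∀ {X Y : 𝒞} (f : X ⟶ Y), N f → ∃ (T : 𝒞) (p : X ⟶ T) (q : T ⟶ Y),
      NTrivial N T ∧ p ≫ q = f) ∧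
  (∀ {S X : 𝒞} (m : S ⟶ X), Mono m → NTrivial N X → NTrivial N S) ∧
  (∀ X : 𝒞, NTrivial N X → NTrivial N (X ⨯ X))

/-- A square of type (1) is a star-regular pushout when `(c g°)* = f° d*`. -/
def IsStarRegularPushout [HasPullbacks 𝒞] (N : MorphismProperty 𝒞) {A B E D : 𝒞}
    (f : A ⟶ B) (g : E ⟶ D) (c : E ⟶ A) (d : D ⟶ B) : Prop :=
  ∀ (ρ τ μ : Rel 𝒞 D A) (ds : Rel 𝒞 D B),
    IsRelComp (homRel c) (Rel.op (homRel g)) ρ → IsLargestStarSub N ρ τ →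
    IsLargestStarSub N (homRel d) ds → IsRelComp (Rel.op (homRel f)) ds μ →
    τ.equiv μ

/-- 2-star-permutability: `Eq(f) Eq(g)* = Eq(g) Eq(f)*` for all regular
epimorphisms `f`, `g` with the same domain. -/
def TwoStarPermutable (𝒞 : Type u) [Category.{v} 𝒞] [HasPullbacks 𝒞]
    (N : MorphismProperty 𝒞) : Prop :=
  ∀ {X Y Z : 𝒞} (f : X ⟶ Y) (g : X ⟶ Z), IsRegEpi f → IsRegEpi g →
    ∀ (sf sg : Rel 𝒞 X X), IsLargestStarSub N (kerPairRel f) sf →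
      IsLargestStarSub N (kerPairRel g) sg →
    ∀ (τ₁ τ₂ : Rel 𝒞 X X), IsRelComp (kerPairRel f) sg τ₁ →
      IsRelComp (kerPairRel g) sf τ₂ → τ₁.equiv τ₂

section Pointed

variable [HasZeroMorphisms 𝒞]

/-- `k` is a kernel of `f`. -/
def IsKernelOf {K X Y : 𝒞} (k : K ⟶ X) (f : X ⟶ Y) : Prop :=
  k ≫ f = 0 ∧ ∀ {Z : 𝒞} (m : Z ⟶ X), m ≫ f = 0 → ∃! u : Z ⟶ K, u ≫ k = m

/-- `f` is a cokernel of `k`. -/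
def IsCokernelOf {X Y K : 𝒞} (f : X ⟶ Y) (k : K ⟶ X) : Prop :=
  k ≫ f = 0 ∧ ∀ {T : 𝒞} (h : X ⟶ T), k ≫ h = 0 → ∃! u : Y ⟶ T, f ≫ u = h

/-- Short exact sequence `K → X ↠ Y`. -/
def IsShortExact {K X Y : 𝒞} (k : K ⟶ X) (f : X ⟶ Y) : Prop :=
  IsKernelOf k f ∧ IsCokernelOf f k

/-- Subtractivity: every reflexive, left punctual relation is right punctual. -/
def IsSubtractive (𝒞 : Type u) [Category.{v} 𝒞] [HasZeroMorphisms 𝒞] : Prop :=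
  ∀ {X : 𝒞} (ρ : Rel 𝒞 X X), ρ.IsReflexive →
    (∃ l : X ⟶ ρ.R, l ≫ ρ.p1 = 𝟙 X ∧ l ≫ ρ.p2 = 0) →
    (∃ r : X ⟶ ρ.R, r ≫ ρ.p1 = 0 ∧ r ≫ ρ.p2 = 𝟙 X)

end Pointed

/-- The star relation `(0, ker g)` on `X` determined by the kernel `k` of `g`. -/
def kerStarRel [HasZeroMorphisms 𝒞] {K X Y : 𝒞} (k : K ⟶ X) {g : X ⟶ Y}
    (h : IsKernelOf k g) : Rel 𝒞 X X :=
  ⟨K, 0, k, fun a b _ hab => by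
    obtain ⟨u, -, huniq⟩ := h.2 (a ≫ k) (by rw [Category.assoc, h.1, comp_zero])
    rw [huniq a rfl, huniq b hab.symm]⟩

lemma IsRegEpi.cancel {X Y : 𝒞} {f : X ⟶ Y} (hf : IsRegEpi f) {T : 𝒞}
    {u v : Y ⟶ T} (h : f ≫ u = f ≫ v) : u = v := by
  obtain ⟨Z, a, b, hab, huniv⟩ := hf
  have hh : a ≫ (f ≫ u) = b ≫ (f ≫ u) := by
    rw [← Category.assoc, hab, Category.assoc]
  obtain ⟨w, hw, hu⟩ := huniv (f ≫ u) hh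
  exact (hu u rfl).trans (hu v h.symm).symm

lemma isRegEpi_of_splitEpi {X Y : 𝒞} (f : X ⟶ Y) (s : Y ⟶ X) (hs : s ≫ f = 𝟙 Y) :
    IsRegEpi f := by
  refine ⟨X, f ≫ s, 𝟙 X, by rw [Category.assoc, hs, Category.comp_id, Category.id_comp], ?_⟩
  intro T h hh
  refine ⟨s ≫ h, ?_, ?_⟩
  · show f ≫ s ≫ h = h
    rw [← Category.assoc]; simpa using hh
  · intro u' hu'
    rw [← hu', ← Category.assoc, hs, Category.id_comp]

lemma descend_jm {A B C Y1 Y2 : 𝒞} {r : A ⟶ B} (hr : IsRegEpi r)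
    (s1 : C ⟶ Y1) (s2 : C ⟶ Y2)
    (jm : ∀ {Z : 𝒞} (a b : Z ⟶ C), a ≫ s1 = b ≫ s1 → a ≫ s2 = b ≫ s2 → a = b)
    (u : A ⟶ C) (v1 : B ⟶ Y1) (v2 : B ⟶ Y2)
    (h1 : u ≫ s1 = r ≫ v1) (h2 : u ≫ s2 = r ≫ v2) :
    ∃ j : B ⟶ C, r ≫ j = u ∧ j ≫ s1 = v1 ∧ j ≫ s2 = v2 := by
  obtain ⟨Z, a, b, hab, huniv⟩ := id hr
  have key : ∀ {D : 𝒞} (s : C ⟶ D) (v : B ⟶ D), u ≫ s = r ≫ v →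
      (a ≫ u) ≫ s = (b ≫ u) ≫ s := by
    intro D s v hv
    rw [Category.assoc, Category.assoc, hv, ← Category.assoc, ← Category.assoc, hab]
  have hcoeq : a ≫ u = b ≫ u := jm _ _ (key s1 v1 h1) (key s2 v2 h2)
  obtain ⟨j, hj, -⟩ := huniv u hcoeq
  refine ⟨j, hj, ?_, ?_⟩
  · exact hr.cancel (by rw [← Category.assoc, hj, h1])
  · exact hr.cancel (by rw [← Category.assoc, hj, h2])

lemma imageFact [HasFiniteLimits 𝒞] (hcoeq : KernelPairsHaveCoequalisers 𝒞)
    (hstab : RegEpisStable 𝒞) {A B : 𝒞} (h : A ⟶ B) :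
    ∃ (I : 𝒞) (e : A ⟶ I) (m : I ⟶ B), IsRegEpi e ∧
      (∀ {T : 𝒞} (u v : T ⟶ I), u ≫ m = v ≫ m → u = v) ∧ e ≫ m = h := by
  obtain ⟨Q, q, hq1, hq2⟩ := hcoeq h (pullback.fst h h) (pullback.snd h h)
    (IsPullback.of_hasPullback h h)
  obtain ⟨m, hm, -⟩ := hq2 h pullback.condition
  have hq : IsRegEpi q := ⟨pullback h h, pullback.fst h h, pullback.snd h h, hq1,
    fun h' hh' => hq2 h' hh'⟩
  refine ⟨Q, q, m, hq, ?_, hm⟩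
  intro T u v huv
  -- cover T by pullbacks along q twice
  have hc1 : IsRegEpi (pullback.fst u q) :=
    hstab _ _ u q (IsPullback.of_hasPullback u q) hq
  set c1 := pullback.fst u q
  set u1 := pullback.snd u q with hu1def
  have cond1 : c1 ≫ u = u1 ≫ q := pullback.condition
  have hc2 : IsRegEpi (pullback.fst (c1 ≫ v) q) :=
    hstab _ _ (c1 ≫ v) q (IsPullback.of_hasPullback (c1 ≫ v) q) hq
  set c2 := pullback.fst (c1 ≫ v) q
  set v2 := pullback.snd (c1 ≫ v) q with hv2def
  have cond2 : c2 ≫ (c1 ≫ v) = v2 ≫ q := pullback.condition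
  have key : (c2 ≫ u1) ≫ h = v2 ≫ h := by
    rw [← hm]
    calc (c2 ≫ u1) ≫ q ≫ m = (c2 ≫ (u1 ≫ q)) ≫ m := by simp [Category.assoc]
      _ = (c2 ≫ (c1 ≫ u)) ≫ m := by rw [cond1]
      _ = (c2 ≫ c1) ≫ u ≫ m := by simp [Category.assoc]
      _ = (c2 ≫ c1) ≫ v ≫ m := by rw [huv]
      _ = (c2 ≫ (c1 ≫ v)) ≫ m := by simp [Category.assoc]
      _ = (v2 ≫ q) ≫ m := by rw [cond2]
      _ = v2 ≫ q ≫ m := by simp [Category.assoc]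
  set w := pullback.lift (c2 ≫ u1) v2 key with hwdef
  have hw1 : w ≫ pullback.fst h h = c2 ≫ u1 := pullback.lift_fst _ _ _
  have hw2 : w ≫ pullback.snd h h = v2 := pullback.lift_snd _ _ _
  have step : (c2 ≫ u1) ≫ q = v2 ≫ q := by
    rw [← hw1, ← hw2, Category.assoc, Category.assoc, hq1]
  have final : (c2 ≫ c1) ≫ u = (c2 ≫ c1) ≫ v := by
    calc (c2 ≫ c1) ≫ u = c2 ≫ (c1 ≫ u) := by rw [Category.assoc]
      _ = c2 ≫ (u1 ≫ q) := by rw [cond1]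
      _ = (c2 ≫ u1) ≫ q := by rw [Category.assoc]
      _ = v2 ≫ q := step
      _ = c2 ≫ (c1 ≫ v) := cond2.symm
      _ = (c2 ≫ c1) ≫ v := by rw [Category.assoc]
  exact hc1.cancel (hc2.cancel (by simpa [Category.assoc] using final))

lemma subtraction_aux [HasZeroMorphisms 𝒞] [HasFiniteLimits 𝒞]
    (hsub : IsSubtractive 𝒞) (hcoeq : KernelPairsHaveCoequalisers 𝒞)
    (hstab : RegEpisStable 𝒞) {S Y' Z' T : 𝒞} (θ1 : S ⟶ Y') (θ2 : S ⟶ Z')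
    (p q : T ⟶ S) (h1 : p ≫ θ1 = q ≫ θ1) (h2 : q ≫ θ2 = 0) :
    ∃ (T' : 𝒞) (c : T' ⟶ T) (t : T' ⟶ S),
      IsRegEpi c ∧ t ≫ θ1 = 0 ∧ t ≫ θ2 = c ≫ p ≫ θ2 := by
  set Φ : S ⟶ Y' ⨯ Z' := prod.lift θ1 θ2 with hΦ
  set Ψ : T ⨯ T ⟶ Y' ⨯ Z' := prod.map (p ≫ θ1) (p ≫ θ2) with hΨ
  set sQ : pullback Φ Ψ ⟶ S := pullback.fst Φ Ψ with hsQ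
  set π : pullback Φ Ψ ⟶ T ⨯ T := pullback.snd Φ Ψ with hπ
  obtain ⟨I, e, m, he, hjm, hem⟩ := imageFact hcoeq hstab π
  set ρ : Rel 𝒞 T T := ⟨I, m ≫ prod.fst, m ≫ prod.snd, by
    intro Z a b hA hB
    apply hjm
    apply Limits.prod.hom_ext
    · simpa [Category.assoc] using hA
    · simpa [Category.assoc] using hB⟩ with hρ
  have hq1 : ∀ (w : T ⟶ pullback Φ Ψ), (w ≫ e) ≫ ρ.p1 = w ≫ π ≫ prod.fst := by
    intro w
    show (w ≫ e) ≫ m ≫ prod.fst = _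
    rw [Category.assoc, ← Category.assoc e m, hem, ← Category.assoc, Category.assoc]
  have hq2 : ∀ (w : T ⟶ pullback Φ Ψ), (w ≫ e) ≫ ρ.p2 = w ≫ π ≫ prod.snd := by
    intro w
    show (w ≫ e) ≫ m ≫ prod.snd = _
    rw [Category.assoc, ← Category.assoc e m, hem, ← Category.assoc, Category.assoc]
  -- reflexivity
  have hrefl : ρ.IsReflexive := by
    refine ⟨pullback.lift p (prod.lift (𝟙 T) (𝟙 T)) ?hc ≫ e, ?_, ?_⟩
    case hc => apply Limits.prod.hom_ext <;> simp [hΦ, hΨ]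
    · rw [hq1]; simp [hπ]; simp only [pullback.lift_snd_assoc]; exact prod.lift_fst _ _
    · rw [hq2]; simp [hπ]; simp only [pullback.lift_snd_assoc]; exact prod.lift_snd _ _
  have hleft : ∃ l : T ⟶ ρ.R, l ≫ ρ.p1 = 𝟙 T ∧ l ≫ ρ.p2 = 0 := by
    refine ⟨pullback.lift q (prod.lift (𝟙 T) 0) ?hc ≫ e, ?_, ?_⟩
    case hc =>
      apply Limits.prod.hom_ext
      · simp [hΦ, hΨ, h1]; exact (prod.lift_fst _ _).trans (prod.lift_fst _ _).symm
      · simp [hΦ, hΨ, h2]; exact (prod.lift_snd _ _).trans (prod.lift_snd _ _).symm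
    · rw [hq1]; simp [hπ]; simp only [pullback.lift_snd_assoc]; exact prod.lift_fst _ _
    · rw [hq2]; simp [hπ]; simp only [pullback.lift_snd_assoc]; exact prod.lift_snd _ _
  obtain ⟨ξ, hξ1, hξ2⟩ := hsub ρ hrefl hleft
  have hξ1' : ξ ≫ m ≫ prod.fst = 0 := hξ1
  have hξ2' : ξ ≫ m ≫ prod.snd = 𝟙 T := hξ2
  have hcond : pullback.fst ξ e ≫ ξ = pullback.snd ξ e ≫ e := pullback.condition
  have hkey1 : sQ ≫ θ1 = π ≫ prod.fst ≫ p ≫ θ1 := by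
    have h := congrArg (fun z => z ≫ prod.fst) (pullback.condition (f := Φ) (g := Ψ))
    simp [hΦ, hΨ, Category.assoc] at h
    exact (prod.lift_fst _ _).symm.trans h
  have hkey2 : sQ ≫ θ2 = π ≫ prod.snd ≫ p ≫ θ2 := by
    have h := congrArg (fun z => z ≫ prod.snd) (pullback.condition (f := Φ) (g := Ψ))
    simp [hΦ, hΨ, Category.assoc] at h
    exact (prod.lift_snd _ _).symm.trans h
  have hz1 : pullback.snd ξ e ≫ π ≫ prod.fst = 0 := by
    rw [← hem]
    calc pullback.snd ξ e ≫ (e ≫ m) ≫ prod.fst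
        = (pullback.snd ξ e ≫ e) ≫ m ≫ prod.fst := by
          simp only [Category.assoc]
      _ = (pullback.fst ξ e ≫ ξ) ≫ m ≫ prod.fst := by rw [hcond]
      _ = pullback.fst ξ e ≫ ξ ≫ m ≫ prod.fst := by rw [Category.assoc]
      _ = 0 := by rw [hξ1', comp_zero]
  have hz2 : pullback.snd ξ e ≫ π ≫ prod.snd = pullback.fst ξ e := by
    rw [← hem]
    calc pullback.snd ξ e ≫ (e ≫ m) ≫ prod.snd
        = (pullback.snd ξ e ≫ e) ≫ m ≫ prod.snd := by
          simp only [Category.assoc]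
      _ = (pullback.fst ξ e ≫ ξ) ≫ m ≫ prod.snd := by rw [hcond]
      _ = pullback.fst ξ e ≫ ξ ≫ m ≫ prod.snd := by rw [Category.assoc]
      _ = pullback.fst ξ e := by rw [hξ2', Category.comp_id]
  refine ⟨pullback ξ e, pullback.fst ξ e, pullback.snd ξ e ≫ sQ,
    hstab _ _ ξ e (IsPullback.of_hasPullback ξ e) he, ?_, ?_⟩
  · rw [Category.assoc, hkey1, ← Category.assoc, ← Category.assoc,
      Category.assoc (pullback.snd ξ e) π prod.fst, hz1, zero_comp]
  · rw [Category.assoc, hkey2, ← Category.assoc, ← Category.assoc,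
      Category.assoc (pullback.snd ξ e) π prod.snd, hz2]

lemma le_side [HasZeroMorphisms 𝒞] [HasFiniteLimits 𝒞]
    (hsub : IsSubtractive 𝒞) (hcoeq : KernelPairsHaveCoequalisers 𝒞)
    (hstab : RegEpisStable 𝒞)
    (f : X ⟶ Y) (g : X ⟶ Z)
    {Kf Kg : 𝒞} (kf : Kf ⟶ X) (kg : Kg ⟶ X)
    (hkf : IsKernelOf kf f) (hkg : IsKernelOf kg g)
    (τ₁ τ₂ : Rel 𝒞 X X)
    (h1 : IsRelComp (kerPairRel f) (kerStarRel kg hkg) τ₁)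
    (h2 : IsRelComp (kerPairRel g) (kerStarRel kf hkf) τ₂) : τ₁.le τ₂ := by
  obtain ⟨e₁, he₁, he₁1, he₁2⟩ := h1
  obtain ⟨e₂, he₂, he₂1, he₂2⟩ := h2
  -- explicit (definitionally equal) forms
  have he₁1' : e₁ ≫ τ₁.p1 = pullback.fst kg (pullback.fst f f) ≫ (0 : Kg ⟶ X) := he₁1
  have he₁2' : e₁ ≫ τ₁.p2 = pullback.snd kg (pullback.fst f f) ≫ pullback.snd f f := he₁2
  have he₂1' : e₂ ≫ τ₂.p1 = pullback.fst kf (pullback.fst g g) ≫ (0 : Kf ⟶ X) := he₂1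
  have he₂2' : e₂ ≫ τ₂.p2 = pullback.snd kf (pullback.fst g g) ≫ pullback.snd g g := he₂2
  have hcond₁ : pullback.fst kg (pullback.fst f f) ≫ kg
      = pullback.snd kg (pullback.fst f f) ≫ pullback.fst f f := pullback.condition
  have hpq1 : (pullback.snd kg (pullback.fst f f) ≫ pullback.snd f f) ≫ f
      = (pullback.fst kg (pullback.fst f f) ≫ kg) ≫ f := by
    rw [Category.assoc, ← pullback.condition (f := f) (g := f), hcond₁, Category.assoc]
  have hpq2 : (pullback.fst kg (pullback.fst f f) ≫ kg) ≫ g = 0 := by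
    rw [Category.assoc, hkg.1, comp_zero]
  obtain ⟨T', c, t, hc, ht1, ht2⟩ := subtraction_aux hsub hcoeq hstab f g
    (pullback.snd kg (pullback.fst f f) ≫ pullback.snd f f)
    (pullback.fst kg (pullback.fst f f) ≫ kg) hpq1 hpq2
  obtain ⟨v, hv, -⟩ := hkf.2 t ht1
  have hlift2 : t ≫ g = (c ≫ pullback.snd kg (pullback.fst f f) ≫ pullback.snd f f) ≫ g := by
    rw [ht2]; simp only [Category.assoc]
  have hdcomp : v ≫ kf = pullback.lift t _ hlift2 ≫ pullback.fst g g := by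
    rw [hv, pullback.lift_fst]
  have hu1 : (pullback.lift v (pullback.lift t _ hlift2) hdcomp ≫ e₂) ≫ τ₂.p1
      = c ≫ (e₁ ≫ τ₁.p1) := by
    refine (Category.assoc _ _ _).trans ?_
    refine (congrArg (pullback.lift v (pullback.lift t _ hlift2) hdcomp ≫ ·) he₂1').trans ?_
    refine Eq.trans ?_ (congrArg (c ≫ ·) he₁1').symm
    simp only [comp_zero]
  have hu2 : (pullback.lift v (pullback.lift t _ hlift2) hdcomp ≫ e₂) ≫ τ₂.p2
      = c ≫ (e₁ ≫ τ₁.p2) := by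
    refine (Category.assoc _ _ _).trans ?_
    refine (congrArg (pullback.lift v (pullback.lift t _ hlift2) hdcomp ≫ ·) he₂2').trans ?_
    refine Eq.trans ?_ (congrArg (c ≫ ·) he₁2').symm
    rw [← Category.assoc]
    rw [show pullback.lift v (pullback.lift t _ hlift2) hdcomp ≫ pullback.snd kf (pullback.fst g g)
        = pullback.lift t _ hlift2 from pullback.lift_snd _ _ _, pullback.lift_snd]
  obtain ⟨c', -, hc'1, hc'2⟩ := descend_jm hc τ₂.p1 τ₂.p2 τ₂.jm _
    (e₁ ≫ τ₁.p1) (e₁ ≫ τ₁.p2) hu1 hu2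
  obtain ⟨j, -, hj1, hj2⟩ := descend_jm he₁ τ₂.p1 τ₂.p2 τ₂.jm c' τ₁.p1 τ₁.p2 hc'1 hc'2
  exact ⟨j, hj1, hj2⟩

lemma kernel_isKernelOf [HasZeroMorphisms 𝒞] [HasFiniteLimits 𝒞] {A B : 𝒞} (h : A ⟶ B) :
    IsKernelOf (kernel.ι h) h := by
  refine ⟨kernel.condition h, fun m hm => ⟨kernel.lift h m hm, kernel.lift_ι _ _ _, ?_⟩⟩
  intro y hy
  rw [← cancel_mono (kernel.ι h), hy, kernel.lift_ι]

lemma subtractive_of_perm [HasZeroMorphisms 𝒞] [HasFiniteLimits 𝒞]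
    (hcoeq : KernelPairsHaveCoequalisers 𝒞) (hstab : RegEpisStable 𝒞)
    (H : ∀ {X Y Z : 𝒞} (f : X ⟶ Y) (g : X ⟶ Z), IsRegEpi f → IsRegEpi g →
        ∀ {Kf Kg : 𝒞} (kf : Kf ⟶ X) (kg : Kg ⟶ X)
          (hkf : IsKernelOf kf f) (hkg : IsKernelOf kg g),
        ∀ (τ₁ τ₂ : Rel 𝒞 X X),
          IsRelComp (kerPairRel f) (kerStarRel kg hkg) τ₁ →
          IsRelComp (kerPairRel g) (kerStarRel kf hkf) τ₂ → τ₁.equiv τ₂) :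
    IsSubtractive 𝒞 := by
  intro X ρ hrefl hleft
  obtain ⟨r, hr1, hr2⟩ := hrefl
  obtain ⟨l, hl1, hl2⟩ := hleft
  have hf : IsRegEpi ρ.p1 := isRegEpi_of_splitEpi _ r hr1
  have hg : IsRegEpi ρ.p2 := isRegEpi_of_splitEpi _ r hr2
  have hkf := kernel_isKernelOf ρ.p1
  have hkg := kernel_isKernelOf ρ.p2
  -- τ₁ := (0, 𝟙) on ρ.R
  let τ₁ : Rel 𝒞 ρ.R ρ.R := ⟨ρ.R, 0, 𝟙 ρ.R, fun a b _ h2 => by simpa using h2⟩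
  -- the composite span for τ₁
  let e : pullback (kernel.ι ρ.p2) (pullback.fst ρ.p1 ρ.p1) ⟶ ρ.R :=
    pullback.snd (kernel.ι ρ.p2) (pullback.fst ρ.p1 ρ.p1) ≫ pullback.snd ρ.p1 ρ.p1
  have hm1 : (ρ.p1 ≫ l) ≫ ρ.p2 = 0 := by rw [Category.assoc, hl2, comp_zero]
  have hm2 : (ρ.p1 ≫ l) ≫ ρ.p1 = 𝟙 ρ.R ≫ ρ.p1 := by
    rw [Category.assoc, hl1, Category.comp_id, Category.id_comp]
  have hs : kernel.lift ρ.p2 (ρ.p1 ≫ l) hm1 ≫ kernel.ι ρ.p2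
      = pullback.lift (ρ.p1 ≫ l) (𝟙 ρ.R) hm2 ≫ pullback.fst ρ.p1 ρ.p1 := by
    rw [kernel.lift_ι, pullback.lift_fst]
  have hse : pullback.lift _ _ hs ≫ e = 𝟙 ρ.R := by
    show pullback.lift _ _ hs ≫ pullback.snd _ _ ≫ pullback.snd ρ.p1 ρ.p1 = 𝟙 ρ.R
    rw [← Category.assoc, pullback.lift_snd, pullback.lift_snd]
  have he : IsRegEpi e := isRegEpi_of_splitEpi e _ hse
  have hτ₁ : IsRelComp (kerPairRel ρ.p1) (kerStarRel (kernel.ι ρ.p2) hkg) τ₁ := by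
    refine ⟨e, he, ?_, ?_⟩
    · show e ≫ (0 : ρ.R ⟶ ρ.R)
        = pullback.fst (kernel.ι ρ.p2) (pullback.fst ρ.p1 ρ.p1) ≫ (0 : kernel ρ.p2 ⟶ ρ.R)
      simp only [comp_zero]
    · show e ≫ 𝟙 ρ.R = _
      rw [Category.comp_id]
      rfl
  -- τ₂ via image factorisation
  obtain ⟨I, e₂, m, he₂, hmono, hem⟩ := imageFact hcoeq hstab
    (pullback.snd (kernel.ι ρ.p1) (pullback.fst ρ.p2 ρ.p2) ≫ pullback.snd ρ.p2 ρ.p2)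
  let τ₂ : Rel 𝒞 ρ.R ρ.R := ⟨I, 0, m, fun a b _ hb => hmono a b hb⟩
  have hτ₂ : IsRelComp (kerPairRel ρ.p2) (kerStarRel (kernel.ι ρ.p1) hkf) τ₂ := by
    refine ⟨e₂, he₂, ?_, hem⟩
    show e₂ ≫ (0 : I ⟶ ρ.R)
      = pullback.fst (kernel.ι ρ.p1) (pullback.fst ρ.p2 ρ.p2) ≫ (0 : kernel ρ.p1 ⟶ ρ.R)
    simp only [comp_zero]
  obtain ⟨⟨j, hj1, hj2⟩, -⟩ := H ρ.p1 ρ.p2 hf hg (kernel.ι ρ.p1) (kernel.ι ρ.p2)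
    hkf hkg τ₁ τ₂ hτ₁ hτ₂
  have hjm' : j ≫ m = 𝟙 ρ.R := hj2
  -- pull back e₂ along r ≫ j
  have hQ : IsRegEpi (pullback.fst (r ≫ j) e₂) :=
    hstab _ _ (r ≫ j) e₂ (IsPullback.of_hasPullback _ _) he₂
  have hcondQ : pullback.fst (r ≫ j) e₂ ≫ (r ≫ j) = pullback.snd (r ≫ j) e₂ ≫ e₂ :=
    pullback.condition
  have hcondP : pullback.fst (kernel.ι ρ.p1) (pullback.fst ρ.p2 ρ.p2) ≫ kernel.ι ρ.p1
      = pullback.snd (kernel.ι ρ.p1) (pullback.fst ρ.p2 ρ.p2) ≫ pullback.fst ρ.p2 ρ.p2 :=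
    pullback.condition
  have hA : (pullback.snd (r ≫ j) e₂
        ≫ pullback.fst (kernel.ι ρ.p1) (pullback.fst ρ.p2 ρ.p2) ≫ kernel.ι ρ.p1) ≫ ρ.p1
      = pullback.fst (r ≫ j) e₂ ≫ 0 := by
    simp only [Category.assoc, kernel.condition, comp_zero]
  have hB : (pullback.snd (r ≫ j) e₂
        ≫ pullback.fst (kernel.ι ρ.p1) (pullback.fst ρ.p2 ρ.p2) ≫ kernel.ι ρ.p1) ≫ ρ.p2
      = pullback.fst (r ≫ j) e₂ ≫ 𝟙 X := by
    calc (pullback.snd (r ≫ j) e₂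
          ≫ pullback.fst (kernel.ι ρ.p1) (pullback.fst ρ.p2 ρ.p2) ≫ kernel.ι ρ.p1) ≫ ρ.p2
        = pullback.snd (r ≫ j) e₂
          ≫ (pullback.fst (kernel.ι ρ.p1) (pullback.fst ρ.p2 ρ.p2) ≫ kernel.ι ρ.p1) ≫ ρ.p2 := by
          simp only [Category.assoc]
      _ = pullback.snd (r ≫ j) e₂
          ≫ (pullback.snd (kernel.ι ρ.p1) (pullback.fst ρ.p2 ρ.p2) ≫ pullback.fst ρ.p2 ρ.p2) ≫ ρ.p2 := by
          rw [hcondP]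
      _ = pullback.snd (r ≫ j) e₂
          ≫ pullback.snd (kernel.ι ρ.p1) (pullback.fst ρ.p2 ρ.p2)
          ≫ pullback.snd ρ.p2 ρ.p2 ≫ ρ.p2 := by
          simp only [Category.assoc, pullback.condition (f := ρ.p2) (g := ρ.p2)]
      _ = (pullback.snd (r ≫ j) e₂ ≫ e₂) ≫ m ≫ ρ.p2 := by
          rw [Category.assoc, reassoc_of% hem]
      _ = (pullback.fst (r ≫ j) e₂ ≫ (r ≫ j)) ≫ m ≫ ρ.p2 := by rw [hcondQ]
      _ = pullback.fst (r ≫ j) e₂ ≫ r ≫ (j ≫ m) ≫ ρ.p2 := by simp only [Category.assoc]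
      _ = pullback.fst (r ≫ j) e₂ ≫ 𝟙 X := by
          rw [hjm', Category.id_comp, hr2]
  obtain ⟨dd, -, hd1, hd2⟩ := descend_jm hQ ρ.p1 ρ.p2 ρ.jm _ 0 (𝟙 X) hA hB
  exact ⟨dd, by rw [hd1], by rw [hd2]⟩

/-- A pointed regular category is subtractive iff it is
2-star-permutable with respect to the ideal of zero morphisms:
`Eq(f) Eq(g)* = Eq(g) Eq(f)*` for all regular epimorphisms `f`, `g` with the same
domain, where `Eq(h)* = (0, ker h)`. -/
theorem statement17 [HasZeroObject 𝒞] [HasZeroMorphisms 𝒞] [HasFiniteLimits 𝒞]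
    (hcoeq : KernelPairsHaveCoequalisers 𝒞) (hstab : RegEpisStable 𝒞) :
    IsSubtractive 𝒞 ↔
      ∀ {X Y Z : 𝒞} (f : X ⟶ Y) (g : X ⟶ Z), IsRegEpi f → IsRegEpi g →
        ∀ {Kf Kg : 𝒞} (kf : Kf ⟶ X) (kg : Kg ⟶ X)
          (hkf : IsKernelOf kf f) (hkg : IsKernelOf kg g),
        ∀ (τ₁ τ₂ : Rel 𝒞 X X),
          IsRelComp (kerPairRel f) (kerStarRel kg hkg) τ₁ →
          IsRelComp (kerPairRel g) (kerStarRel kf hkf) τ₂ → τ₁.equiv τ₂ := by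
  constructor
  · intro hsub X Y Z f g _ _ Kf Kg kf kg hkf hkg τ₁ τ₂ h1 h2
    exact ⟨le_side hsub hcoeq hstab f g kf kg hkf hkg τ₁ τ₂ h1 h2,
      le_side hsub hcoeq hstab g f kg kf hkg hkf τ₂ τ₁ h2 h1⟩
  · intro H
    exact subtractive_of_perm hcoeq hstab @H

end Paper
end

section
/- In a multi-pointed category with kernels, for any relation ρ = (ρ1, ρ2): R ⇉ X, the pair (ρ1·n_{ρ1}, ρ2·n_{ρ1}), where n_{ρ1} is the N-kernel of ρ1, is the largest subrelation of ρ which is a star; moreover ρ* = ρΔ_X* as composites of relations, where Δ_X* = (n_{1_X}, n_{1_X}) for the N-kernel n_{1_X} of 1_X. -/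
open CategoryTheory CategoryTheory.Limits

universe v u

namespace Paper

variable {𝒞 : Type u} [Category.{v} 𝒞]

variable {X Y Z : 𝒞}

/-- The candidate star `(ρ1·n, ρ2·n)` obtained from an `N`-kernel `n` of `ρ1`. -/
def nkerRel (N : MorphismProperty 𝒞) (hN : IsIdeal N) {X Y : 𝒞} (ρ : Rel 𝒞 X Y)
    {K : 𝒞} (n : K ⟶ ρ.R) (hn : IsNKernel N ρ.p1 n) : Rel 𝒞 X Y :=
  ⟨K, n ≫ ρ.p1, n ≫ ρ.p2, fun a b h1 h2 => by
    have hab : a ≫ n = b ≫ n :=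
      ρ.jm (a ≫ n) (b ≫ n) (by simpa using h1) (by simpa using h2)
    obtain ⟨u, -, huniq⟩ := hn.2 (a ≫ n)
      (by rw [Category.assoc]; exact hN a (n ≫ ρ.p1) (Or.inr hn.1))
    rw [huniq a rfl, huniq b hab.symm]⟩

/-- In a multi-pointed category with kernels, for any relation
`ρ = (ρ1, ρ2) : R ⇉ X`, the pair `(ρ1·n, ρ2·n)`, with `n` the `N`-kernel of `ρ1`,
is the largest star subrelation of `ρ`; moreover `ρ* = ρ Δ_X*` as composites of
relations. -/
theorem statement19 [HasFiniteLimits 𝒞]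
    (N : MorphismProperty 𝒞) (hN : IsIdeal N) (hker : HasNKernels N)
    {X : 𝒞} (ρ : Rel 𝒞 X X) {K : 𝒞} (n : K ⟶ ρ.R) (hn : IsNKernel N ρ.p1 n) :
    IsLargestStarSub N ρ (nkerRel N hN ρ n hn) ∧
    (∀ (dX : Rel 𝒞 X X) (τ : Rel 𝒞 X X),
      IsLargestStarSub N (diagRel X) dX → IsRelComp ρ dX τ →
      τ.equiv (nkerRel N hN ρ n hn)) := by
  constructor
  · refine ⟨⟨n, rfl, rfl⟩, hn.1, ?_⟩
    rintro σ ⟨j, hj1, hj2⟩ hσ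
    obtain ⟨u, hu, -⟩ := hn.2 j (by rw [hj1]; exact hσ)
    exact ⟨u, by show u ≫ n ≫ ρ.p1 = σ.p1; rw [
        ← Category.assoc, hu, hj1],
      by show u ≫ n ≫ ρ.p2 = σ.p2; rw [
        ← Category.assoc, hu, hj2]⟩
  · rintro dX τ ⟨⟨j0, hj01, hj02⟩, hNd, hlarge⟩ ⟨e, he, he1, he2⟩
    have hd : dX.p1 = dX.p2 := by
      simp only [diagRel, homRel, Category.comp_id] at hj01 hj02
      rw [← hj01, ← hj02]
    have heEpi : ∀ {T : 𝒞} (x y : τ.R ⟶ T), e ≫ x = e ≫ y → x = y := by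
      obtain ⟨Z, a, b, hab, huniq⟩ := he
      intro T x y hxy
      obtain ⟨u, -, huu⟩ := huniq (e ≫ x)
        (by rw [← Category.assoc, hab, Category.assoc])
      exact (huu x rfl).trans (huu y hxy.symm).symm
    have hcond : pullback.fst dX.p2 ρ.p1 ≫ dX.p2 = pullback.snd dX.p2 ρ.p1 ≫ ρ.p1 :=
      pullback.condition
    constructor
    · -- τ ≤ nkerRel
      obtain ⟨u, hu, -⟩ := hn.2 (pullback.snd dX.p2 ρ.p1)
        (by rw [← hcond]; exact hN _ dX.p2 (Or.inr (hd ▸ hNd)))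
      have hkey1 : u ≫ n ≫ ρ.p1 = e ≫ τ.p1 := by
        rw [← Category.assoc, hu, ← hcond, he1, hd]
      have hkey2 : u ≫ n ≫ ρ.p2 = e ≫ τ.p2 := by
        rw [← Category.assoc, hu, he2]
      obtain ⟨Z, a, b, hab, huniq⟩ := he
      have hau : a ≫ u = b ≫ u := by
        apply (nkerRel N hN ρ n hn).jm
        · show (a ≫ u) ≫ n ≫ ρ.p1 = (b ≫ u) ≫ n ≫ ρ.p1
          rw [Category.assoc, Category.assoc, hkey1,
            ← Category.assoc, hab, Category.assoc]
        · show (a ≫ u) ≫ n ≫ ρ.p2 = (b ≫ u) ≫ n ≫ ρ.p2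
          rw [Category.assoc, Category.assoc, hkey2,
            ← Category.assoc, hab, Category.assoc]
      obtain ⟨j, hj, -⟩ := huniq u hau
      refine ⟨j, ?_, ?_⟩
      · apply heEpi
        show e ≫ j ≫ n ≫ ρ.p1 = e ≫ τ.p1
        rw [← Category.assoc, hj, hkey1]
      · apply heEpi
        show e ≫ j ≫ n ≫ ρ.p2 = e ≫ τ.p2
        rw [← Category.assoc, hj, hkey2]
    · -- nkerRel ≤ τ
      obtain ⟨K1, n1, hn1⟩ := hker (𝟙 X)
      have hn1mono : ∀ {Z : 𝒞} (a b : Z ⟶ K1), a ≫ n1 = b ≫ n1 → a = b := by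
        intro Z a b hab
        obtain ⟨v, -, hvv⟩ := hn1.2 (a ≫ n1)
          (by rw [Category.assoc]; exact hN a (n1 ≫ 𝟙 X) (Or.inr hn1.1))
        rw [hvv a rfl, hvv b hab.symm]
      have hNn1 : N n1 := by
        have := hn1.1; rwa [Category.comp_id] at this
      have hσ1le : (⟨K1, n1, n1, fun a b h _ => hn1mono a b h⟩ : Rel 𝒞 X X).le (diagRel X) :=
        ⟨n1, by simp [diagRel, homRel], by simp [diagRel, homRel]⟩
      obtain ⟨w, hw1, hw2⟩ := hlarge _ hσ1le hNn1
      obtain ⟨u0, hu0, -⟩ := hn1.2 (n ≫ ρ.p1)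
        (by rw [Category.comp_id]; exact hn.1)
      have hliftcond : (u0 ≫ w) ≫ dX.p2 = n ≫ ρ.p1 := by
        rw [Category.assoc, hw2, hu0]
      refine ⟨pullback.lift (u0 ≫ w) n hliftcond ≫ e, ?_, ?_⟩
      · show (pullback.lift (u0 ≫ w) n hliftcond ≫ e) ≫ τ.p1 = n ≫ ρ.p1
        rw [Category.assoc, he1, ← Category.assoc, pullback.lift_fst, hd, hliftcond]
      · show (pullback.lift (u0 ≫ w) n hliftcond ≫ e) ≫ τ.p2 = n ≫ ρ.p2
        rw [Category.assoc, he2, ← Category.assoc, pullback.lift_snd]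

end Paper
end
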